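/- Let n and t be positive integers with t ≤ n, and let F := {x ∈ {0,1}^n : the Hamming weight of x is at most (n − t)/2}. Then (1) F is a (pairwise) t-agreeing family, i.e., any two members of F agree on at least t coordinates, and (2) |F| ≥ 2^(n−1) − (t + 1) · C(n, ⌊n/2⌋). -/

import Mathlib

/-- The Hamming weight of a boolean string. -/
def hammingWeight {n : ℕ} (x : Fin n → Bool) : ℕ :=
  (Finset.univ.filter (fun i : Fin n => x i = true)).card

open Finset in
lemma count_by_weight (n : ℕ) (P : ℕ → Prop) [DecidablePred P] :
    (Finset.univ.filter (fun x : Fin n → Bool => P (hammingWeight x))).card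
      = ∑ k ∈ (Finset.range (n+1)).filter P, n.choose k := by
  have step1 : (Finset.univ.filter (fun x : Fin n → Bool => P (hammingWeight x))).card
      = (Finset.univ.filter (fun s : Finset (Fin n) => P s.card)).card := by
    apply Finset.card_bij (fun x _ => Finset.univ.filter (fun i : Fin n => x i = true))
    · intro x hx
      simp only [mem_filter, mem_univ, true_and] at hx ⊢
      exact hx
    · intro x hx y hy h
      funext i
      have := Finset.ext_iff.mp h i
      simp only [mem_filter, mem_univ, true_and] at this
      revert this; cases x i <;> cases y i <;> simp
    · intro s hs
      refine ⟨fun i => decide (i ∈ s), ?_, ?_⟩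
      · simp only [mem_filter, mem_univ, true_and] at hs ⊢
        have : hammingWeight (fun i => decide (i ∈ s)) = s.card := by
          unfold hammingWeight
          congr 1
          ext i; simp
        rw [this]; exact hs
      · ext i; simp
  rw [step1]
  have step2 : Finset.univ.filter (fun s : Finset (Fin n) => P s.card)
      = ((Finset.range (n+1)).filter P).biUnion
          (fun k => Finset.powersetCard k (Finset.univ : Finset (Fin n))) := by
    ext s
    simp only [mem_filter, mem_univ, true_and, mem_biUnion, mem_range,
      Finset.mem_powersetCard_univ]
    constructor
    · intro h
      exact ⟨s.card, ⟨by have := Finset.card_le_univ s; simp at this; omega, h⟩, rfl⟩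
    · rintro ⟨k, ⟨-, hk⟩, rfl⟩; exact hk
  rw [step2, Finset.card_biUnion]
  · apply Finset.sum_congr rfl
    intro k _
    rw [Finset.card_powersetCard]
    simp
  · intro i _ j _ hij
    show Disjoint _ _
    rw [Finset.disjoint_left]
    intro s hs hs'
    rw [Finset.mem_powersetCard_univ] at hs hs'
    exact hij (hs ▸ hs')

theorem lowWeight_tAgreeing (n t : ℕ) (hn : 0 < n) (ht : 0 < t) (hnt : t ≤ n) :
    (∀ a ∈ Finset.univ.filter
        (fun x : Fin n → Bool => 2 * hammingWeight x ≤ n - t),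
      ∀ b ∈ (Finset.univ.filter
        (fun x : Fin n → Bool => 2 * hammingWeight x ≤ n - t)),
      t ≤ (Finset.univ.filter (fun i : Fin n => a i = b i)).card) ∧
    2 ^ (n - 1) - (t + 1) * n.choose (n / 2) ≤
      (Finset.univ.filter
        (fun x : Fin n → Bool => 2 * hammingWeight x ≤ n - t)).card := by
  constructor
  · intro a ha b hb
    simp only [Finset.mem_filter, Finset.mem_univ, true_and] at ha hb
    have hsplit := Finset.card_filter_add_card_filter_not
      (s := (Finset.univ : Finset (Fin n))) (p := fun i : Fin n => a i = b i)
    have hsub : Finset.univ.filter (fun i : Fin n => ¬ a i = b i) ⊆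
        Finset.univ.filter (fun i : Fin n => a i = true) ∪
          Finset.univ.filter (fun i : Fin n => b i = true) := by
      intro i hi
      simp only [Finset.mem_filter, Finset.mem_univ, true_and, Finset.mem_union] at hi ⊢
      revert hi; cases a i <;> cases b i <;> simp
    have hcard := (Finset.card_le_card hsub).trans (Finset.card_union_le _ _)
    have hwa : (Finset.univ.filter (fun i : Fin n => a i = true)).card = hammingWeight a := rfl
    have hwb : (Finset.univ.filter (fun i : Fin n => b i = true)).card = hammingWeight b := rfl
    rw [hwa, hwb] at hcard
    have huniv : (Finset.univ : Finset (Fin n)).card = n := by simp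
    rw [huniv] at hsplit
    omega
  · rw [count_by_weight n (fun k => 2 * k ≤ n - t)]
    set R := Finset.range (n + 1) with hR
    set A := ∑ k ∈ R.filter (fun k => 2 * k < n), n.choose k with hA
    set A' := ∑ k ∈ R.filter (fun k => n < 2 * k), n.choose k with hA'
    set E := ∑ k ∈ R.filter (fun k => 2 * k = n), n.choose k with hE
    set B := ∑ k ∈ R.filter (fun k => 2 * k ≤ n - t), n.choose k with hB
    have hrefl : A' = A := by
      rw [hA, hA']
      refine Finset.sum_nbij' (i := fun k => n - k) (j := fun k => n - k) ?_ ?_ ?_ ?_ ?_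
      · intro k hk
        simp only [hR, Finset.mem_filter, Finset.mem_range] at hk ⊢
        omega
      · intro k hk
        simp only [hR, Finset.mem_filter, Finset.mem_range] at hk ⊢
        omega
      · intro k hk
        simp only [hR, Finset.mem_filter, Finset.mem_range] at hk
        show n - (n - k) = k
        omega
      · intro k hk
        simp only [hR, Finset.mem_filter, Finset.mem_range] at hk
        show n - (n - k) = k
        omega
      · intro k hk
        simp only [hR, Finset.mem_filter, Finset.mem_range] at hk
        exact (Nat.choose_symm (by omega)).symm
    have htotal : A + E + A' = 2 ^ n := by
      rw [hA, hE, hA', Finset.sum_filter, Finset.sum_filter, Finset.sum_filter,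
        ← Finset.sum_add_distrib, ← Finset.sum_add_distrib, hR]
      rw [show (2:ℕ)^n = ∑ k ∈ Finset.range (n+1), n.choose k from
        (Nat.sum_range_choose n).symm]
      apply Finset.sum_congr rfl
      intro k _
      rcases Nat.lt_trichotomy (2 * k) n with h | h | h
      · simp [h, show ¬ 2 * k = n by omega, show ¬ n < 2 * k by omega]
      · simp [h, show ¬ 2 * k < n by omega, show ¬ n < 2 * k by omega]
      · simp [h, show ¬ 2 * k < n by omega, show ¬ 2 * k = n by omega]
    have hEC : E ≤ n.choose (n / 2) := by
      rw [hE]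
      calc ∑ k ∈ R.filter (fun k => 2 * k = n), n.choose k
          ≤ ∑ k ∈ ({n / 2} : Finset ℕ), n.choose k := by
            apply Finset.sum_le_sum_of_subset
            intro k hk
            simp only [hR, Finset.mem_filter, Finset.mem_range, Finset.mem_singleton] at hk ⊢
            omega
        _ = n.choose (n / 2) := by simp
    have hband : A ≤ B + t * n.choose (n / 2) := by
      have hsplit2 : A = (∑ k ∈ (R.filter (fun k => 2 * k < n)).filter
            (fun k => 2 * k ≤ n - t), n.choose k)
          + ∑ k ∈ (R.filter (fun k => 2 * k < n)).filter
            (fun k => ¬ 2 * k ≤ n - t), n.choose k :=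
        (Finset.sum_filter_add_sum_filter_not _ _ _).symm
      have h1 : (R.filter (fun k => 2 * k < n)).filter (fun k => 2 * k ≤ n - t)
          = R.filter (fun k => 2 * k ≤ n - t) := by
        rw [Finset.filter_filter]
        apply Finset.filter_congr
        intro k hk
        simp only [hR, Finset.mem_range] at hk
        constructor
        · intro h; omega
        · intro h; omega
      have h2 : ∑ k ∈ (R.filter (fun k => 2 * k < n)).filter
            (fun k => ¬ 2 * k ≤ n - t), n.choose k
          ≤ t * n.choose (n / 2) := by
        have hsub2 : (R.filter (fun k => 2 * k < n)).filter (fun k => ¬ 2 * k ≤ n - t)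
            ⊆ Finset.Ioc ((n - t) / 2) ((n - t) / 2 + t) := by
          intro k hk
          simp only [hR, Finset.mem_filter, Finset.mem_range, Finset.mem_Ioc] at hk ⊢
          omega
        calc ∑ k ∈ (R.filter (fun k => 2 * k < n)).filter
              (fun k => ¬ 2 * k ≤ n - t), n.choose k
            ≤ ∑ k ∈ Finset.Ioc ((n - t) / 2) ((n - t) / 2 + t), n.choose k :=
              Finset.sum_le_sum_of_subset hsub2
          _ ≤ ∑ _k ∈ Finset.Ioc ((n - t) / 2) ((n - t) / 2 + t), n.choose (n / 2) :=
              Finset.sum_le_sum (fun k _ => Nat.choose_le_middle k n)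
          _ = t * n.choose (n / 2) := by
              rw [Finset.sum_const, Nat.card_Ioc, smul_eq_mul]
              congr 1
              omega
      rw [hsplit2, h1, hB]
      exact Nat.add_le_add_left h2 _
    have h2n : (2:ℕ) ^ n = 2 * 2 ^ (n - 1) := by
      rw [← pow_succ']
      congr 1
      omega
    rw [h2n] at htotal
    rw [show (t + 1) * n.choose (n / 2) = t * n.choose (n / 2) + n.choose (n / 2) by ring]
    rw [hrefl] at htotal
    generalize ht' : t * n.choose (n / 2) = u at hband ⊢
    omega
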